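/- Let Z be a finite nonempty type of confounder strata and let p : {0,1} × {0,1} × Z → ℝ be a joint probability mass function for (X, A, Z) (nonnegative, summing to 1), with Pr(A = a, Z = z) > 0 for every a ∈ {0,1} and z ∈ Z. Define balancing weights w(a, z) = Pr(A = 1 | Z = z)/Pr(A = a | Z = z), the weighted conditional probabilities θ⁽ʷ⁾ₓ = [Σ_z w(1,z)·p(x,1,z)] / [Σ_{a'∈{0,1}} Σ_z w(a',z)·p(x,a',z)] for x ∈ {0,1}, assumed to lie strictly between 0 and 1, and the weighted odds ratio OR⁽ʷ⁾ = [θ⁽ʷ⁾₁/(1 − θ⁽ʷ⁾₁)] / [θ⁽ʷ⁾₀/(1 − θ⁽ʷ⁾₀)]. Assume additionally that Pr(X = 0 | A = 1) > 0 and Σ_z w(0,z)·p(0,0,z) > 0. Then OR⁽ʷ⁾ = [Pr(X = 1 | A = 1)/Pr(X = 0 | A = 1)] / [Σ_z w(0,z)·p(1,0,z) / Σ_z w(0,z)·p(0,0,z)], i.e., the balancing-weighted odds ratio equals the marginal odds ratio estimated by inverse probability of treatment weighting with infection A as treatment and symptom X as outcome. -/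

import Mathlib

open Finset

/-- The balancing-weighted odds ratio between infection `A` and symptom `X`
equals the marginal odds ratio estimated by inverse probability of treatment
weighting with infection as treatment and symptom as outcome.

Here `Z` is a finite nonempty type of confounder strata and `p x a z` is the
joint probability mass function of `(X, A, Z)`, with `x a : Bool` (`true` = 1,
`false` = 0). -/
theorem weighted_or_eq_iptw_or
    {Z : Type*} [Fintype Z] [Nonempty Z]
    (p : Bool → Bool → Z → ℝ)
    -- p is a pmf
    (hp_nonneg : ∀ x a z, 0 ≤ p x a z)
    (hp_sum : ∑ x : Bool, ∑ a : Bool, ∑ z : Z, p x a z = 1)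
    -- Pr(A = a, Z = z) > 0 for every a, z
    (hAZ_pos : ∀ (a : Bool) (z : Z), 0 < ∑ x : Bool, p x a z)
    -- balancing weights w(a, z) = Pr(A = 1 | Z = z) / Pr(A = a | Z = z)
    (w : Bool → Z → ℝ)
    (hw : ∀ (a : Bool) (z : Z),
      w a z = ((∑ x : Bool, p x true z) / (∑ x : Bool, ∑ a' : Bool, p x a' z)) /
              ((∑ x : Bool, p x a z) / (∑ x : Bool, ∑ a' : Bool, p x a' z)))
    -- weighted conditional probabilities θ⁽ʷ⁾ₓ, assumed strictly in (0, 1)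
    (θ : Bool → ℝ)
    (hθ : ∀ x : Bool,
      θ x = (∑ z : Z, w true z * p x true z) /
            (∑ a' : Bool, ∑ z : Z, w a' z * p x a' z))
    (hθ0 : ∀ x : Bool, 0 < θ x) (hθ1 : ∀ x : Bool, θ x < 1)
    -- weighted odds ratio
    (ORw : ℝ)
    (hORw : ORw = (θ true / (1 - θ true)) / (θ false / (1 - θ false)))
    -- conditional distribution of X given A = 1
    (prXgivenA1 : Bool → ℝ)
    (hpr : ∀ x : Bool,
      prXgivenA1 x = (∑ z : Z, p x true z) / (∑ x' : Bool, ∑ z : Z, p x' true z))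
    -- positivity assumptions
    (hpr0 : 0 < prXgivenA1 false)
    (hden : 0 < ∑ z : Z, w false z * p false false z) :
    ORw = (prXgivenA1 true / prXgivenA1 false) /
      ((∑ z : Z, w false z * p true false z) / (∑ z : Z, w false z * p false false z)) := by
  -- w true z = 1
  have htot : ∀ z : Z, 0 < ∑ x : Bool, ∑ a' : Bool, p x a' z := by
    intro z
    have : (∑ x : Bool, ∑ a' : Bool, p x a' z) = (∑ a' : Bool, ∑ x : Bool, p x a' z) :=
      Finset.sum_comm
    rw [this, Fintype.sum_bool]
    exact add_pos (hAZ_pos true z) (hAZ_pos false z)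
  have hw1 : ∀ z : Z, w true z = 1 := by
    intro z
    rw [hw]
    exact div_self (ne_of_gt (div_pos (hAZ_pos true z) (htot z)))
  have hwpos : ∀ z : Z, 0 < w false z := by
    intro z
    rw [hw]
    exact div_pos (div_pos (hAZ_pos true z) (htot z)) (div_pos (hAZ_pos false z) (htot z))
  set S1 : Bool → ℝ := fun x => ∑ z : Z, p x true z with hS1
  set S0 : Bool → ℝ := fun x => ∑ z : Z, w false z * p x false z with hS0
  have hS1true : ∀ x : Bool, (∑ z : Z, w true z * p x true z) = S1 x := by
    intro x; simp [hS1, hw1]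
  have hθ' : ∀ x : Bool, θ x = S1 x / (S0 x + S1 x) := by
    intro x
    rw [hθ, Fintype.sum_bool, hS1true]
    simp [hS0, add_comm]
  have hS1nn : ∀ x : Bool, 0 ≤ S1 x := fun x =>
    Finset.sum_nonneg fun z _ => hp_nonneg x true z
  have hS0nn : ∀ x : Bool, 0 ≤ S0 x := fun x =>
    Finset.sum_nonneg fun z _ => mul_nonneg (hwpos z).le (hp_nonneg x false z)
  have hDpos : ∀ x : Bool, 0 < S0 x + S1 x := by
    intro x
    rcases lt_or_eq_of_le (add_nonneg (hS0nn x) (hS1nn x)) with h | h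
    · exact h
    · exfalso; have := hθ0 x; rw [hθ' x, ← h, div_zero] at this; exact lt_irrefl 0 this
  have hS1pos : ∀ x : Bool, 0 < S1 x := by
    intro x
    rcases lt_or_eq_of_le (hS1nn x) with h | h
    · exact h
    · exfalso; have := hθ0 x; rw [hθ' x, ← h, zero_div] at this; exact lt_irrefl 0 this
  have hS0pos : ∀ x : Bool, 0 < S0 x := by
    intro x
    rcases lt_or_eq_of_le (hS0nn x) with h | h
    · exact h
    · exfalso
      have := hθ1 x
      rw [hθ' x, ← h, zero_add, div_self (hS1pos x).ne'] at this
      exact lt_irrefl 1 this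
  have hodds : ∀ x : Bool, θ x / (1 - θ x) = S1 x / S0 x := by
    intro x
    rw [hθ' x]
    have hD := (hDpos x).ne'
    field_simp
    rw [add_sub_cancel_right]
  have hT : 0 < ∑ x' : Bool, ∑ z : Z, p x' true z := by
    rw [Fintype.sum_bool]
    exact add_pos (hS1pos true) (hS1pos false)
  have hpr' : ∀ x : Bool, prXgivenA1 x = S1 x / (∑ x' : Bool, ∑ z : Z, p x' true z) := by
    intro x; rw [hpr]
  have hprratio : prXgivenA1 true / prXgivenA1 false = S1 true / S1 false := by
    rw [hpr' true, hpr' false, div_div_div_comm, div_self hT.ne', div_one]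
  rw [hORw, hodds true, hodds false, hprratio]
  have h1 := (hS1pos false).ne'
  have h0t := (hS0pos true).ne'
  have h0f := (hS0pos false).ne'
  exact div_div_div_comm _ _ _ _
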